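/- With the setup of the previous statement, the aggregated binary 0-1 risk satisfies r(k) = E[|k - Y|] where Y has distribution (η_1,...,η_K) on {1,...,K}; i.e., Σ_{m=1}^{K-1} [𝟙(m ≥ k)·Σ_{ℓ>m} η_ℓ + 𝟙(m < k)·Σ_{ℓ≤m} η_ℓ] = Σ_{ℓ=1}^{K} η_ℓ·|k - ℓ|. -/

import Mathlib

/-- The aggregated binary 0-1 risk over the `K-1` ordinal subproblems equals the
expected absolute-distance loss: `r(k) = E[|k - Y|]` where `P(Y = ℓ+1) = η ℓ`.
`η ℓ` (for `ℓ < K`) is the probability of class `ℓ + 1`. -/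
theorem stmt_19 (K : ℕ) (η : ℕ → ℝ) (hnn : ∀ ℓ < K, 0 ≤ η ℓ)
    (hsum : ∑ ℓ ∈ Finset.range K, η ℓ = 1)
    (k : ℕ) (hk1 : 1 ≤ k) (hk2 : k ≤ K) :
    (∑ m ∈ Finset.Icc 1 (K - 1),
        (if k ≤ m then ∑ ℓ ∈ Finset.Ico m K, η ℓ
         else ∑ ℓ ∈ Finset.range m, η ℓ)) =
      ∑ ℓ ∈ Finset.range K, η ℓ * |(k : ℝ) - ((ℓ : ℝ) + 1)| := by
  have step1 : ∀ m ∈ Finset.Icc 1 (K - 1),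
      (if k ≤ m then ∑ ℓ ∈ Finset.Ico m K, η ℓ
       else ∑ ℓ ∈ Finset.range m, η ℓ)
      = ∑ ℓ ∈ Finset.range K, η ℓ *
          (if k ≤ m then (if m ≤ ℓ then (1:ℝ) else 0)
           else (if ℓ < m then 1 else 0)) := by
    intro m hm
    simp only [Finset.mem_Icc] at hm
    by_cases hkm : k ≤ m
    · simp only [hkm, if_true, mul_ite, mul_one, mul_zero]
      rw [← Finset.sum_filter]
      congr 1
      ext ℓ
      simp only [Finset.mem_filter, Finset.mem_range, Finset.mem_Ico]
      tauto
    · simp only [hkm, if_false, mul_ite, mul_one, mul_zero]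
      rw [← Finset.sum_filter]
      congr 1
      ext ℓ
      simp only [Finset.mem_filter, Finset.mem_range]
      omega
  rw [Finset.sum_congr rfl step1, Finset.sum_comm]
  refine Finset.sum_congr rfl ?_
  intro ℓ hℓ
  simp only [Finset.mem_range] at hℓ
  rw [← Finset.mul_sum]
  congr 1
  by_cases hkl : k ≤ ℓ
  · have hsub : Finset.Icc k ℓ ⊆ Finset.Icc 1 (K - 1) := by
      intro m hm
      simp only [Finset.mem_Icc] at hm ⊢
      omega
    have hout : ∀ m ∈ Finset.Icc 1 (K - 1), m ∉ Finset.Icc k ℓ →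
        (if k ≤ m then (if m ≤ ℓ then (1:ℝ) else 0)
         else (if ℓ < m then 1 else 0)) = 0 := by
      intro m hm hnm
      simp only [Finset.mem_Icc] at hm hnm
      by_cases h : k ≤ m
      · have : ¬ m ≤ ℓ := by omega
        simp [h, this]
      · have : ¬ ℓ < m := by omega
        simp [h, this]
    have hone : ∀ m ∈ Finset.Icc k ℓ,
        (if k ≤ m then (if m ≤ ℓ then (1:ℝ) else 0)
         else (if ℓ < m then 1 else 0)) = 1 := by
      intro m hm
      simp only [Finset.mem_Icc] at hm
      simp [hm.1, hm.2]
    rw [← Finset.sum_subset hsub hout, Finset.sum_congr rfl hone,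
      Finset.sum_const, Nat.card_Icc, nsmul_eq_mul, mul_one]
    have hc : (k:ℝ) ≤ (ℓ:ℝ) := by exact_mod_cast hkl
    rw [abs_of_nonpos (by linarith)]
    push_cast [Nat.cast_sub (by omega : k ≤ ℓ + 1)]
    ring
  · have hsub : Finset.Icc (ℓ + 1) (k - 1) ⊆ Finset.Icc 1 (K - 1) := by
      intro m hm
      simp only [Finset.mem_Icc] at hm ⊢
      omega
    have hout : ∀ m ∈ Finset.Icc 1 (K - 1), m ∉ Finset.Icc (ℓ + 1) (k - 1) →
        (if k ≤ m then (if m ≤ ℓ then (1:ℝ) else 0)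
         else (if ℓ < m then 1 else 0)) = 0 := by
      intro m hm hnm
      simp only [Finset.mem_Icc] at hm hnm
      by_cases h : k ≤ m
      · have : ¬ m ≤ ℓ := by omega
        simp [h, this]
      · have : ¬ ℓ < m := by omega
        simp [h, this]
    have hone : ∀ m ∈ Finset.Icc (ℓ + 1) (k - 1),
        (if k ≤ m then (if m ≤ ℓ then (1:ℝ) else 0)
         else (if ℓ < m then 1 else 0)) = 1 := by
      intro m hm
      simp only [Finset.mem_Icc] at hm
      have h1 : ¬ k ≤ m := by omega
      have h2 : ℓ < m := by omega
      simp [h1, h2]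
    rw [← Finset.sum_subset hsub hout, Finset.sum_congr rfl hone,
      Finset.sum_const, Nat.card_Icc, nsmul_eq_mul, mul_one]
    have hc : ((ℓ:ℝ) + 1) ≤ (k:ℝ) := by exact_mod_cast (by omega : ℓ + 1 ≤ k)
    rw [abs_of_nonneg (by linarith)]
    have hcard : k - 1 + 1 - (ℓ + 1) = k - (ℓ + 1) := by omega
    rw [hcard]
    push_cast [Nat.cast_sub (by omega : ℓ + 1 ≤ k)]
    ring
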